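/- If p is an odd prime, then the polynomial (C_p(x) − 2)/(x − 2) ∈ ℤ[x] (equivalently U_p(x)² where C_p(x) − 2 = (x−2)·U_p(x)²; here the degree-(p−1) quotient) has the property that U_p(x) = S_{(p+1)/2}(x) + S_{(p−1)/2}(x) is irreducible over ℚ. -/
import Mathlib

open Polynomial

/-- Normalized Chebyshev polynomial of the first kind: `C 0 = 2`, `C 1 = X`,
`C (n+2) = X * C (n+1) - C n`. -/
noncomputable def chebC : ℕ → Polynomial ℤ
  | 0 => 2
  | 1 => X
  | n + 2 => X * chebC (n + 1) - chebC n

/-- Normalized Chebyshev polynomial of the second kind: `S 0 = 0`, `S 1 = 1`,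
`S (n+2) = X * S (n+1) - S n`. -/
noncomputable def chebS : ℕ → Polynomial ℤ
  | 0 => 0
  | 1 => 1
  | n + 2 => X * chebS (n + 1) - chebS n

noncomputable def chebU (k : ℕ) : Polynomial ℤ := chebS (k + 1) + chebS k

lemma chebC_add_two (n : ℕ) : chebC (n + 2) = X * chebC (n + 1) - chebC n := rfl
lemma chebS_add_two (n : ℕ) : chebS (n + 2) = X * chebS (n + 1) - chebS n := rfl

lemma chebU_add_two (k : ℕ) : chebU (k + 2) = X * chebU (k + 1) - chebU k := by
  simp only [chebU, chebS_add_two]; ring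

lemma chebC_eq_dickson (n : ℕ) : chebC n = dickson 1 1 n := by
  induction n using Nat.strong_induction_on with
  | _ n ih =>
    match n with
    | 0 => show (2 : Polynomial ℤ) = dickson 1 1 0; rw [dickson]; norm_num
    | 1 => rw [dickson]; rfl
    | n + 2 =>
      rw [chebC_add_two, dickson, ih (n+1) (by omega), ih n (by omega)]
      simp

lemma key (k : ℕ) :
    ((X : Polynomial ℤ) - 2) * chebU k ^ 2 = chebC (2 * k + 1) - 2 ∧
    ((X : Polynomial ℤ) - 2) * (chebU (k + 1) * chebU k) = chebC (2 * k + 2) - X ∧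
    ((X : Polynomial ℤ) - 2) * chebU (k + 1) ^ 2 = chebC (2 * k + 3) - 2 := by
  induction k with
  | zero =>
    refine ⟨?_, ?_, ?_⟩ <;>
      · simp only [chebU, chebC, chebS, Nat.mul_zero, Nat.zero_add]
        ring
  | succ k ih =>
    obtain ⟨h1, h2, h3⟩ := ih
    have hU : chebU (k + 1 + 1) = X * chebU (k + 1) - chebU k := chebU_add_two k
    have hC3 : chebC (2 * k + 3) = X * chebC (2 * k + 2) - chebC (2 * k + 1) := by
      have := chebC_add_two (2 * k + 1)
      rwa [show 2*k+1+2 = 2*k+3 by ring, show 2*k+1+1 = 2*k+2 by ring] at this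
    have hC4 : chebC (2 * k + 4) = X * chebC (2 * k + 3) - chebC (2 * k + 2) := by
      have := chebC_add_two (2 * k + 2)
      rwa [show 2*k+2+2 = 2*k+4 by ring, show 2*k+2+1 = 2*k+3 by ring] at this
    have hC5 : chebC (2 * k + 5) = X * chebC (2 * k + 4) - chebC (2 * k + 3) := by
      have := chebC_add_two (2 * k + 3)
      rwa [show 2*k+3+2 = 2*k+5 by ring, show 2*k+3+1 = 2*k+4 by ring] at this
    refine ⟨?_, ?_, ?_⟩
    · rw [show 2*(k+1)+1 = 2*k+3 by ring]; exact h3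
    · rw [show 2*(k+1)+2 = 2*k+4 by ring]
      linear_combination X * h3 - h2 + ((X - 2) * chebU (k+1)) * hU - hC4
    · rw [show 2*(k+1)+3 = 2*k+5 by ring]
      linear_combination X^2 * h3 - 2*X*h2 + h1
        + ((X - 2) * (chebU (k+1+1) + X * chebU (k+1) - chebU k)) * hU - hC5 - X * hC4 + hC3

lemma chebS_monic (n : ℕ) :
    (chebS (n + 1)).Monic ∧ (chebS (n + 1)).natDegree = n ∧ (chebS n).degree < n := by
  induction n with
  | zero =>
    refine ⟨monic_one, natDegree_one, ?_⟩
    show (0 : Polynomial ℤ).degree < 0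
    rw [degree_zero]
    exact WithBot.bot_lt_coe 0
  | succ n ih =>
    obtain ⟨hm, hd, hlt⟩ := ih
    have hXm : (X * chebS (n + 1)).Monic := monic_X.mul hm
    have hXd : (X * chebS (n + 1)).degree = ((n + 1 : ℕ) : WithBot ℕ) := by
      rw [degree_mul, degree_X, degree_eq_natDegree hm.ne_zero, hd]
      push_cast
      ring
    have hdeq : (chebS (n + 1 + 1)).degree = ((n + 1 : ℕ) : WithBot ℕ) := by
      rw [chebS_add_two, degree_sub_eq_left_of_degree_lt, hXd]
      calc (chebS n).degree < (n : WithBot ℕ) := hlt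
        _ < _ := by rw [hXd]; exact_mod_cast Nat.lt_succ_self n
    refine ⟨?_, natDegree_eq_of_degree_eq_some hdeq, ?_⟩
    · rw [chebS_add_two]
      exact hXm.sub_of_left (by
        calc (chebS n).degree < (n : WithBot ℕ) := hlt
          _ < _ := by rw [hXd]; exact_mod_cast Nat.lt_succ_self n)
    · rw [degree_eq_natDegree hm.ne_zero, hd]; exact_mod_cast Nat.lt_succ_self n

lemma chebS_eval_two (n : ℕ) :
    (chebS n).eval 2 = n ∧ (chebS (n + 1)).eval 2 = n + 1 := by
  induction n with
  | zero => simp [chebS]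
  | succ n ih =>
    obtain ⟨h1, h2⟩ := ih
    refine ⟨by rw [h2]; push_cast; ring, ?_⟩
    rw [chebS_add_two]
    simp only [eval_sub, eval_mul, eval_X, h1, h2]
    push_cast; ring

lemma chebU_monic (k : ℕ) : (chebU k).Monic := by
  obtain ⟨hm, hd, _⟩ := chebS_monic k
  exact hm.add_of_left (by
    rw [degree_eq_natDegree hm.ne_zero, hd]; exact (chebS_monic k).2.2)

lemma chebU_natDegree (k : ℕ) : (chebU k).natDegree = k := by
  obtain ⟨hm, hd, _⟩ := chebS_monic k
  have hdeq : (chebU k).degree = (k : WithBot ℕ) := by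
    rw [chebU, degree_add_eq_left_of_degree_lt, degree_eq_natDegree hm.ne_zero, hd]
    rw [degree_eq_natDegree hm.ne_zero, hd]
    exact (chebS_monic k).2.2
  exact natDegree_eq_of_degree_eq_some hdeq

/-- For an odd prime `p`, `U_p = S_{(p+1)/2} + S_{(p−1)/2}` is irreducible over `ℚ`. -/
theorem chebU_prime_irreducible (p : ℕ) (hp : p.Prime) (hodd : Odd p) :
    Irreducible ((chebS ((p + 1) / 2) + chebS ((p - 1) / 2)).map (Int.castRingHom ℚ)) := by
  haveI : Fact p.Prime := ⟨hp⟩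
  obtain ⟨k, hk⟩ := hodd
  have hp2 : 2 < p := by
    rcases lt_or_eq_of_le hp.two_le with h | h
    · exact h
    · omega
  haveI : Fact (2 < p) := ⟨hp2⟩
  have hk1 : 1 ≤ k := by omega
  rw [show (p + 1) / 2 = k + 1 by omega, show (p - 1) / 2 = k by omega]
  show Irreducible ((chebU k).map (Int.castRingHom ℚ))
  set f : Polynomial ℤ := (chebU k).comp (X + C 2) with hf
  have hUm := chebU_monic k
  have hUd := chebU_natDegree k
  have hfm : f.Monic := hUm.comp_X_add_C 2
  have hfd : f.natDegree = k := by
    rw [hf, natDegree_comp, natDegree_X_add_C, hUd, mul_one]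
  -- constant coefficient is p
  have hc0 : f.coeff 0 = (p : ℤ) := by
    rw [coeff_zero_eq_eval_zero, hf, eval_comp]
    simp only [eval_add, eval_X, eval_C, zero_add]
    have h1 := (chebS_eval_two k).2
    have h2 := (chebS_eval_two k).1
    simp only [chebU, eval_add, h1, h2]
    push_cast [hk]; ring
  -- key identity composed with X + 2
  have hC2 : (C (2:ℤ)) = (2 : Polynomial ℤ) := map_ofNat C 2
  have hkey : ((X : Polynomial ℤ) - C 2) * chebU k ^ 2 = chebC p - C 2 := by
    rw [hC2, show p = 2 * k + 1 by omega]
    exact (key k).1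
  have hcomp : (X : Polynomial ℤ) * f ^ 2 = (chebC p).comp (X + C 2) - C 2 := by
    have h := congrArg (fun q : Polynomial ℤ => q.comp (X + C 2)) hkey
    simp only [sub_comp, mul_comp, pow_comp, X_comp, C_comp] at h
    linear_combination h
  -- reduction mod p
  set φ := Int.castRingHom (ZMod p) with hφ
  have hmap : (X : Polynomial (ZMod p)) * (f.map φ) ^ 2 = X * (X ^ k) ^ 2 := by
    have h2 := congrArg (Polynomial.map φ) hcomp
    simp only [Polynomial.map_mul, Polynomial.map_pow, Polynomial.map_sub, map_X,
      Polynomial.map_comp, Polynomial.map_add, map_C] at h2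
    rw [chebC_eq_dickson, map_dickson, map_one, dickson_one_one_zmod_p,
      pow_comp, X_comp, add_pow_char X (C (φ 2)) p, ← C_pow, ZMod.pow_card] at h2
    rw [h2, ← pow_mul, ← pow_succ']
    rw [show k * 2 + 1 = p by omega]
    ring
  have hfb2 : (f.map φ) ^ 2 = (X ^ k) ^ 2 :=
    mul_left_cancel₀ (X_ne_zero) hmap
  have hfb : f.map φ = X ^ k := by
    have hsplit : (f.map φ - X ^ k) * (f.map φ + X ^ k) = 0 := by
      linear_combination hfb2
    rcases mul_eq_zero.mp hsplit with h | h
    · exact sub_eq_zero.mp h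
    · exfalso
      have hneg : f.map φ = -(X ^ k) := by linear_combination h
      have h1 : (f.map φ).leadingCoeff = 1 := hfm.map φ
      rw [hneg, leadingCoeff_neg, (monic_X_pow k).leadingCoeff] at h1
      exact CharP.neg_one_ne_one (ZMod p) p h1
  -- Eisenstein at (p)
  have heis : f.IsEisensteinAt (Ideal.span {(p : ℤ)}) := by
    constructor
    · rw [hfm.leadingCoeff, Ideal.mem_span_singleton]
      intro hdvd
      have := Int.le_of_dvd one_pos hdvd
      omega
    · intro n hn
      rw [Ideal.mem_span_singleton, ← ZMod.intCast_zmod_eq_zero_iff_dvd]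
      have hcm : (f.map φ).coeff n = φ (f.coeff n) := coeff_map φ n
      rw [hfb, hfd] at *
      rw [coeff_X_pow, if_neg (Nat.ne_of_lt hn)] at hcm
      exact hcm.symm
    · rw [hc0, Ideal.span_singleton_pow, Ideal.mem_span_singleton]
      intro hdvd
      have hple : (p : ℤ) ^ 2 ≤ (p : ℤ) := Int.le_of_dvd (by positivity) hdvd
      have : (2 : ℤ) ≤ (p : ℤ) := by exact_mod_cast hp.two_le
      nlinarith
  have hprime : (Ideal.span {(p : ℤ)}).IsPrime := by
    rw [Ideal.span_singleton_prime (by exact_mod_cast hp.ne_zero)]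
    exact Int.prime_iff_natAbs_prime.mpr (by simpa using hp)
  have hirrZ : Irreducible f :=
    heis.irreducible hprime hfm.isPrimitive (by rw [hfd]; omega)
  have hirrQ : Irreducible (f.map (Int.castRingHom ℚ)) :=
    (Polynomial.IsPrimitive.Int.irreducible_iff_irreducible_map_cast hfm.isPrimitive).mp hirrZ
  have hmapcomp : f.map (Int.castRingHom ℚ)
      = ((chebU k).map (Int.castRingHom ℚ)).comp (X + C 2) := by
    rw [hf, Polynomial.map_comp]
    simp only [Polynomial.map_add, map_X, map_C]
    norm_num
  have hequiv : (algEquivAevalXAddC (2:ℚ)) ((chebU k).map (Int.castRingHom ℚ))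
      = f.map (Int.castRingHom ℚ) := by
    rw [hmapcomp]
    simp [algEquivAevalXAddC, algEquivOfCompEqX, aeval_def, eval₂_eq_eval_map, comp,
      Polynomial.algebraMap_eq]
  exact (MulEquiv.irreducible_iff (algEquivAevalXAddC (2:ℚ)).toMulEquiv).mp
    (hequiv ▸ hirrQ)
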